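/- Let r ≥ 0 and n ≥ 2 be integers and let ℓ_1, …, ℓ_n ∈ ℝ[x,y] be homogeneous linear forms that are pairwise non-proportional. Let I be the ideal of ℝ[x,y] generated by ℓ_1^{r+1}, …, ℓ_n^{r+1}, let t = min(r+2, n), and let Ω = r + ⌈(r+1)/(t−1)⌉. Then Ω is the minimal integer d such that x^i y^j ∈ I for all i, j ≥ 0 with i + j ≥ d; that is, (a) for all i, j ≥ 0 with i + j ≥ Ω one has x^i y^j ∈ I, and (b) there exist i, j ≥ 0 with i + j = Ω − 1 and x^i y^j ∉ I. -/

import Mathlib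

open MvPolynomial
noncomputable section
set_option maxHeartbeats 800000
/-- Bivariate real polynomials. -/
abbrev Pol := MvPolynomial (Fin 2) ℝ

namespace Stmt4Aux

def Rd (e : ℕ) : Submodule ℝ Pol := homogeneousSubmodule (Fin 2) ℝ e

lemma deg2 (m : Fin 2 →₀ ℕ) : m.degree = m 0 + m 1 := by
  rw [Finsupp.degree_apply]
  rw [Finset.sum_subset (Finset.subset_univ m.support)]
  · exact Fin.sum_univ_two m
  · intro x _ hx
    simpa using (Finsupp.notMem_support_iff.mp hx)

lemma mem_Rd {p : Pol} {e : ℕ} : p ∈ Rd e ↔ p.IsHomogeneous e := Iff.rfl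

lemma mem_Rd_iff {p : Pol} {e : ℕ} :
    p ∈ Rd e ↔ ∀ m : Fin 2 →₀ ℕ, coeff m p ≠ 0 → m 0 + m 1 = e := by
  constructor
  · intro h m hm
    have := (mem_Rd.mp h) hm
    rw [show (Finsupp.weight 1 : (Fin 2 →₀ ℕ) →+ ℕ) = Finsupp.degree from Finsupp.degree_eq_weight_one.symm] at this
    simpa [deg2] using this
  · intro h
    rw [mem_Rd]
    intro m hm
    have := h m hm
    rw [show (Finsupp.weight 1 : (Fin 2 →₀ ℕ) →+ ℕ) = Finsupp.degree from Finsupp.degree_eq_weight_one.symm]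
    simpa [deg2] using this

lemma single2_eq (m : Fin 2 →₀ ℕ) :
    Finsupp.single (0 : Fin 2) (m 0) + Finsupp.single (1 : Fin 2) (m 1) = m := by
  ext i
  fin_cases i <;> simp

lemma XaXb_eq_monomial (a b : ℕ) :
    (X 0 : Pol) ^ a * X 1 ^ b = monomial (Finsupp.single 0 a + Finsupp.single 1 b) 1 := by
  rw [X_pow_eq_monomial, X_pow_eq_monomial, monomial_mul, one_mul]

lemma XaXb_mem (a b : ℕ) : (X 0 : Pol) ^ a * X 1 ^ b ∈ Rd (a + b) := by
  rw [mem_Rd]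
  simpa using ((isHomogeneous_X_pow (R := ℝ) (0 : Fin 2) a).mul (isHomogeneous_X_pow 1 b))

lemma hom_of_eq {p : Pol} {e e' : ℕ} (h : p ∈ Rd e) (he : e = e') : p ∈ Rd e' := he ▸ h

/-- every homogeneous polynomial of degree e is in the span of the monomials of degree e -/
lemma Rd_le_span_monomials (e : ℕ) :
    Rd e ≤ Submodule.span ℝ (Set.range fun j : Fin (e+1) => (X 0 : Pol) ^ (j : ℕ) * X 1 ^ (e - (j : ℕ))) := by
  intro p hp
  rw [p.as_sum]
  apply Submodule.sum_mem
  intro m hm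
  have hdeg : m 0 + m 1 = e := mem_Rd_iff.mp hp m (mem_support_iff.mp hm)
  have h0 : (m 0) < e + 1 := by omega
  have : monomial m (coeff m p) = (coeff m p) • ((X 0 : Pol) ^ (m 0) * X 1 ^ (e - m 0)) := by
    rw [XaXb_eq_monomial]
    have : e - m 0 = m 1 := by omega
    rw [this, single2_eq, smul_monomial, smul_eq_mul, mul_one]
  rw [this]
  apply Submodule.smul_mem
  exact Submodule.subset_span ⟨⟨m 0, h0⟩, rfl⟩

instance Rd_fd (e : ℕ) : FiniteDimensional ℝ (Rd e) :=
  haveI := FiniteDimensional.span_of_finite ℝ (Set.finite_range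
    (fun j : Fin (e+1) => (X 0 : Pol) ^ (j : ℕ) * X 1 ^ (e - (j : ℕ))))
  Submodule.finiteDimensional_of_le (Rd_le_span_monomials e)


/-- weight for the apolarity pairing -/
def w (m : Fin 2 →₀ ℕ) : ℝ := (Nat.factorial (m 0) : ℝ) * (Nat.factorial (m 1) : ℝ)

lemma w_pos (m : Fin 2 →₀ ℕ) : 0 < w m := by
  have h0 := Nat.factorial_pos (m 0); have h1 := Nat.factorial_pos (m 1)
  exact mul_pos (by exact_mod_cast h0) (by exact_mod_cast h1)

/-- the apolarity pairing -/
def B (p q : Pol) : ℝ := ∑ m ∈ p.support, coeff m p * coeff m q * w m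

lemma B_eq_sum_of_subset {p q : Pol} {s : Finset (Fin 2 →₀ ℕ)} (hs : p.support ⊆ s) :
    B p q = ∑ m ∈ s, coeff m p * coeff m q * w m := by
  refine Finset.sum_subset hs ?_
  intro m _ hm
  rw [notMem_support_iff.mp hm]; ring

lemma B_symm (p q : Pol) : B p q = B q p := by
  rw [B_eq_sum_of_subset (Finset.subset_union_left (s₂ := q.support)),
    B_eq_sum_of_subset (Finset.subset_union_right (s₁ := p.support))]
  exact Finset.sum_congr rfl fun m _ => by ring

lemma B_add_right (p q₁ q₂ : Pol) : B p (q₁ + q₂) = B p q₁ + B p q₂ := by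
  simp only [B, coeff_add]
  rw [← Finset.sum_add_distrib]
  exact Finset.sum_congr rfl fun m _ => by ring

lemma B_smul_right (c : ℝ) (p q : Pol) : B p (c • q) = c * B p q := by
  simp only [B, coeff_smul, smul_eq_mul, Finset.mul_sum]
  exact Finset.sum_congr rfl fun m _ => by ring

lemma B_add_left (p₁ p₂ q : Pol) : B (p₁ + p₂) q = B p₁ q + B p₂ q := by
  rw [B_symm, B_add_right, B_symm q p₁, B_symm q p₂]

lemma B_smul_left (c : ℝ) (p q : Pol) : B (c • p) q = c * B p q := by
  rw [B_symm, B_smul_right, B_symm]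

lemma B_zero_left (q : Pol) : B 0 q = 0 := by simp [B]

lemma B_monomial_left (m : Fin 2 →₀ ℕ) (c : ℝ) (q : Pol) :
    B (monomial m c) q = c * coeff m q * w m := by
  by_cases hc : c = 0
  · simp [hc, B_zero_left]
  · rw [B, support_monomial, if_neg hc, Finset.sum_singleton, coeff_monomial, if_pos rfl]

lemma B_eq_zero_self {p : Pol} (h : B p p = 0) : p = 0 := by
  have key : ∀ m ∈ p.support, coeff m p * coeff m p * w m = 0 := by
    rw [B] at h
    refine (Finset.sum_eq_zero_iff_of_nonneg ?_).mp h
    intro m _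
    have := w_pos m
    nlinarith [sq_nonneg (coeff m p)]
  ext m
  by_cases hm : m ∈ p.support
  · have h2 := key m hm
    have hw := (w_pos m).ne'
    rcases mul_eq_zero.mp h2 with h' | h'
    · simpa using mul_self_eq_zero.mp h'
    · exact absurd h' hw
  · simpa using notMem_support_iff.mp hm

/-- pairing of a pure monomial against a polynomial extracts the coefficient -/
lemma B_XaXb (a b : ℕ) (q : Pol) :
    B ((X 0 : Pol) ^ a * X 1 ^ b) q
      = coeff (Finsupp.single 0 a + Finsupp.single 1 b) q * w (Finsupp.single 0 a + Finsupp.single 1 b) := by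
  rw [XaXb_eq_monomial, B_monomial_left, one_mul]

/-- coefficient rule for partial derivative -/
lemma coeff_pderiv (i : Fin 2) (m : Fin 2 →₀ ℕ) (q : Pol) :
    coeff m (pderiv i q) = coeff (m + Finsupp.single i 1) q * ((m i : ℝ) + 1) := by
  induction q using MvPolynomial.induction_on' with
  | add p1 p2 ih1 ih2 => simp only [map_add, coeff_add, ih1, ih2]; ring
  | monomial s c =>
    rw [pderiv_monomial, coeff_monomial, coeff_monomial]
    by_cases h : s = m + Finsupp.single i 1
    · have h1 : s - Finsupp.single i 1 = m := by
        subst h; ext j; simp [Finsupp.single_apply]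
      have h2 : s i = m i + 1 := by subst h; simp
      rw [if_pos h1, if_pos h, h2]
      push_cast; ring
    · rw [if_neg h, zero_mul]
      by_cases h0 : s i = 0
      · by_cases h1 : s - Finsupp.single i 1 = m
        · rw [if_pos h1, h0]; simp
        · rw [if_neg h1]
      · by_cases h1 : s - Finsupp.single i 1 = m
        · exfalso; apply h
          ext j
          by_cases hj : j = i
          · subst hj
            have := DFunLike.congr_fun h1 j
            simp at this
            simp [Finsupp.single_apply]
            omega
          · have := DFunLike.congr_fun h1 j
            simp [Finsupp.single_apply, Ne.symm hj] at this ⊢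
            omega
        · rw [if_neg h1]

lemma w_add_single (s : Fin 2 →₀ ℕ) (i : Fin 2) :
    w (s + Finsupp.single i 1) = ((s i : ℝ) + 1) * w s := by
  fin_cases i <;>
    · simp only [w, Finsupp.add_apply, Finsupp.single_apply]
      norm_num [Nat.factorial_succ]
      ring

/-- multiplication by X i is adjoint to pderiv i -/
lemma B_X_mul (i : Fin 2) (p q : Pol) : B (X i * p) q = B p (pderiv i q) := by
  induction p using MvPolynomial.induction_on' with
  | add p1 p2 ih1 ih2 => rw [mul_add, B_add_left, B_add_left, ih1, ih2]
  | monomial s c =>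
    have : (X i : Pol) * monomial s c = monomial (s + Finsupp.single i 1) c := by
      rw [X, monomial_mul, one_mul, add_comm]
    rw [this, B_monomial_left, B_monomial_left, coeff_pderiv, w_add_single]
    ring

/-- the directional derivative operator a∂₀ + b∂₁ -/
def Dop (a b : ℝ) : Pol →ₗ[ℝ] Pol :=
  a • (pderiv (R := ℝ) (0 : Fin 2)).toLinearMap + b • (pderiv (R := ℝ) (1 : Fin 2)).toLinearMap

lemma Dop_apply (a b : ℝ) (p : Pol) : Dop a b p = a • pderiv 0 p + b • pderiv 1 p := rfl

/-- the linear form a·x + b·y -/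
def L (a b : ℝ) : Pol := C a * X 0 + C b * X 1

lemma B_L_mul (a b : ℝ) (p q : Pol) : B (L a b * p) q = B p (Dop a b q) := by
  have : L a b * p = a • ((X 0 : Pol) * p) + b • ((X 1 : Pol) * p) := by
    rw [smul_eq_C_mul, smul_eq_C_mul, L]; ring
  rw [this, B_add_left, B_smul_left, B_smul_left, B_X_mul, B_X_mul, Dop_apply,
    B_add_right, B_smul_right, B_smul_right]

lemma B_L_pow_mul (a b : ℝ) (k : ℕ) (p q : Pol) :
    B (L a b ^ k * p) q = B p ((Dop a b ^ k) q) := by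
  induction k generalizing q with
  | zero => simp
  | succ k ih =>
    have h1 : L a b ^ (k+1) * p = L a b * (L a b ^ k * p) := by ring
    rw [h1, B_L_mul, ih, pow_succ]
    rfl

lemma pderiv_mem {p : Pol} {e : ℕ} {i : Fin 2} (h : p ∈ Rd (e+1)) : pderiv i p ∈ Rd e := by
  rw [mem_Rd_iff]
  intro m hm
  rw [coeff_pderiv] at hm
  have h1 : coeff (m + Finsupp.single i 1) p ≠ 0 := fun h' => hm (by rw [h']; ring)
  have h2 := mem_Rd_iff.mp h _ h1
  fin_cases i <;> simp [Finsupp.add_apply, Finsupp.single_apply] at h2 <;> omega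

lemma Dop_mem {p : Pol} {e : ℕ} {a b : ℝ} (h : p ∈ Rd (e+1)) : Dop a b p ∈ Rd e := by
  rw [Dop_apply]
  exact Submodule.add_mem _ (Submodule.smul_mem _ _ (pderiv_mem h))
    (Submodule.smul_mem _ _ (pderiv_mem h))

lemma Dop_pow_mem {a b : ℝ} {k : ℕ} :
    ∀ {e : ℕ} {p : Pol}, p ∈ Rd e → k ≤ e → (Dop a b ^ k) p ∈ Rd (e - k) := by
  induction k with
  | zero => intro e p h _; simpa using h
  | succ k ih =>
    intro e p h hk
    obtain ⟨e', rfl⟩ : ∃ e', e = e' + 1 := ⟨e - 1, by omega⟩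
    rw [pow_succ]
    have : (Dop a b ^ k * Dop a b) p = (Dop a b ^ k) (Dop a b p) := rfl
    rw [this]
    have := ih (Dop_mem (a := a) (b := b) h) (by omega)
    exact hom_of_eq this (by omega)

lemma Rd_zero_eq_C {p : Pol} (h : p ∈ Rd 0) : p = C (coeff 0 p) := by
  have h1 := homogeneousComponent_of_mem (mem_Rd.mp h) (m := 0)
  rw [if_pos rfl] at h1
  conv_lhs => rw [← h1, homogeneousComponent_zero]

lemma Dop_pow_annihilate {a b : ℝ} : ∀ {e : ℕ} {p : Pol}, p ∈ Rd e → (Dop a b ^ (e+1)) p = 0 := by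
  intro e
  induction e with
  | zero =>
    intro p h
    rw [pow_one, Rd_zero_eq_C h, Dop_apply]
    simp
  | succ e ih =>
    intro p h
    rw [pow_succ]
    have : (Dop a b ^ (e+1) * Dop a b) p = (Dop a b ^ (e+1)) (Dop a b p) := rfl
    rw [this, ih (Dop_mem h)]

/-- a homogeneous polynomial orthogonal to all monomials of its degree is zero -/
lemma eq_zero_of_orth_monomials {G : Pol} {e : ℕ} (hG : G ∈ Rd e)
    (h : ∀ a b : ℕ, a + b = e → B ((X 0 : Pol) ^ a * X 1 ^ b) G = 0) : G = 0 := by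
  ext m
  rw [coeff_zero]
  by_cases hm : m 0 + m 1 = e
  · have := h (m 0) (m 1) hm
    rw [B_XaXb, single2_eq] at this
    rcases mul_eq_zero.mp this with h' | h'
    · exact h'
    · exact absurd h' (w_pos m).ne'
  · by_contra hc
    exact hm (mem_Rd_iff.mp hG m hc)

/-- the rotated linear form b·x - a·y -/
def Lt (a b : ℝ) : Pol := C b * X 0 - C a * X 1

lemma Lt_eq (a b : ℝ) : Lt a b = L b (-a) := by
  rw [Lt, L, map_neg]; ring

lemma L_mem (a b : ℝ) : L a b ∈ Rd 1 := by
  rw [mem_Rd, L]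
  simpa using (((isHomogeneous_C (Fin 2) a).mul (isHomogeneous_X ℝ 0)).add
    (((isHomogeneous_C (Fin 2) b).mul (isHomogeneous_X ℝ 1))))

lemma Lt_mem (a b : ℝ) : Lt a b ∈ Rd 1 := by rw [Lt_eq]; exact L_mem _ _

lemma Dop_mul (a b : ℝ) (u v : Pol) :
    Dop a b (u * v) = Dop a b u * v + u * Dop a b v := by
  simp only [Dop_apply, pderiv_mul, smul_eq_C_mul]
  ring

lemma Dop_one (a b : ℝ) : Dop a b (1 : Pol) = 0 := by
  rw [Dop_apply]; simp

lemma Dop_L (a b : ℝ) : Dop a b (L a b) = C (a^2 + b^2) := by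
  have h0 : pderiv (0 : Fin 2) (L a b) = C a := by simp [L, pderiv_X]
  have h1 : pderiv (1 : Fin 2) (L a b) = C b := by simp [L, pderiv_X]
  rw [Dop_apply, h0, h1, smul_eq_C_mul, smul_eq_C_mul, ← C_mul, ← C_mul, ← C_add]
  ring_nf

lemma Dop_Lt (a b : ℝ) : Dop a b (Lt a b) = 0 := by
  have h0 : pderiv (0 : Fin 2) (Lt a b) = C b := by simp [Lt, pderiv_X]
  have h1 : pderiv (1 : Fin 2) (Lt a b) = - C a := by simp [Lt, pderiv_X]
  rw [Dop_apply, h0, h1, smul_eq_C_mul, smul_eq_C_mul, mul_neg, ← C_mul, ← C_mul,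
    mul_comm b a]
  ring

lemma Dop_Lt_pow_mul (a b : ℝ) (m : ℕ) (h : Pol) :
    Dop a b (Lt a b ^ m * h) = Lt a b ^ m * Dop a b h := by
  induction m generalizing h with
  | zero => simp
  | succ m ih =>
    have e : Lt a b ^ (m+1) * h = Lt a b ^ m * (Lt a b * h) := by ring
    rw [e, ih, Dop_mul, Dop_Lt]
    ring

lemma Dop_pow_Lt_pow_mul (a b : ℝ) (k m : ℕ) (h : Pol) :
    (Dop a b ^ k) (Lt a b ^ m * h) = Lt a b ^ m * (Dop a b ^ k) h := by
  induction k generalizing h with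
  | zero => simp
  | succ k ih =>
    rw [pow_succ']
    have e1 : (Dop a b * Dop a b ^ k) (Lt a b ^ m * h)
        = Dop a b ((Dop a b ^ k) (Lt a b ^ m * h)) := rfl
    have e2 : (Dop a b * Dop a b ^ k) h = Dop a b ((Dop a b ^ k) h) := rfl
    rw [e1, e2, ih, Dop_Lt_pow_mul]

lemma Dop_Lt_pow (a b : ℝ) (m : ℕ) : Dop a b (Lt a b ^ m) = 0 := by
  have := Dop_Lt_pow_mul a b m 1
  rw [mul_one, Dop_one, mul_zero] at this
  exact this

lemma Dop_L_pow_mul (a b : ℝ) (j m : ℕ) :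
    Dop a b (L a b ^ (j+1) * Lt a b ^ m)
      = (((j : ℝ)+1) * (a^2+b^2)) • (L a b ^ j * Lt a b ^ m) := by
  induction j with
  | zero =>
    rw [pow_one, Dop_mul, Dop_L, Dop_Lt_pow]
    rw [smul_eq_C_mul]
    push_cast
    ring
  | succ j ih =>
    have e : L a b ^ (j+2) * Lt a b ^ m = L a b * (L a b ^ (j+1) * Lt a b ^ m) := by ring
    rw [e, Dop_mul, Dop_L, ih, mul_smul_comm, ← smul_eq_C_mul]
    have e2 : L a b * (L a b ^ j * Lt a b ^ m) = L a b ^ (j+1) * Lt a b ^ m := by ring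
    rw [e2, ← add_smul]
    congr 1
    push_cast; ring

/-- iterated derivative of a basis element, nonvanishing case -/
lemma Dop_pow_basis (a b : ℝ) (j m k : ℕ) (hk : k ≤ j) :
    ∃ c : ℝ, (((a^2+b^2) ≠ 0 → c ≠ 0) ∧
      (Dop a b ^ k) (L a b ^ j * Lt a b ^ m) = c • (L a b ^ (j - k) * Lt a b ^ m)) := by
  induction k with
  | zero => exact ⟨1, fun _ => one_ne_zero, by simp⟩
  | succ k ih =>
    obtain ⟨c, hc, hD⟩ := ih (by omega)
    obtain ⟨j', hj'⟩ : ∃ j', j - k = j' + 1 := ⟨j - k - 1, by omega⟩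
    rw [hj'] at hD
    refine ⟨c * (((j' : ℝ)+1) * (a^2+b^2)), ?_, ?_⟩
    · intro hs
      have : ((j' : ℝ)+1) ≠ 0 := by positivity
      exact mul_ne_zero (hc hs) (mul_ne_zero this hs)
    · rw [pow_succ']
      have e1 : (Dop a b * Dop a b ^ k) (L a b ^ j * Lt a b ^ m)
          = Dop a b ((Dop a b ^ k) (L a b ^ j * Lt a b ^ m)) := rfl
      rw [e1, hD, map_smul, Dop_L_pow_mul]
      have e2 : j - (k+1) = j' := by omega
      rw [e2, smul_smul]

/-- iterated derivative of a basis element, vanishing case -/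
lemma Dop_pow_basis_zero (a b : ℝ) (j m k : ℕ) (hk : j < k) :
    (Dop a b ^ k) (L a b ^ j * Lt a b ^ m) = 0 := by
  obtain ⟨c, _, hD⟩ := Dop_pow_basis a b j m j le_rfl
  have hjj : j - j = 0 := by omega
  rw [hjj, pow_zero, one_mul] at hD
  obtain ⟨k', rfl⟩ : ∃ k', k = (k' + j) + 1 := ⟨k - j - 1, by omega⟩
  have e : Dop a b ^ (k' + j + 1) = (Dop a b ^ k') * (Dop a b * Dop a b ^ j) := by
    rw [show k' + j + 1 = k' + (j + 1) by omega, pow_add, pow_succ']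
  rw [e]
  have e1 : ((Dop a b ^ k') * (Dop a b * Dop a b ^ j)) (L a b ^ j * Lt a b ^ m)
      = (Dop a b ^ k') (Dop a b ((Dop a b ^ j) (L a b ^ j * Lt a b ^ m))) := rfl
  rw [e1, hD, map_smul, Dop_Lt_pow]
  simp

/-- any product of two linear combinations of P and Q to total degree d lies in the span of
the `P^j Q^(d-j)` -/
lemma combo_pow_mem_span (P Q : Pol) (d : ℕ) (c₁ c₂ c₃ c₄ : ℝ) (α β : ℕ) (hαβ : α + β = d) :
    (c₁ • P + c₂ • Q) ^ α * (c₃ • P + c₄ • Q) ^ β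
      ∈ Submodule.span ℝ (Set.range fun j : Fin (d+1) => P ^ (j : ℕ) * Q ^ (d - (j : ℕ))) := by
  rw [add_pow, add_pow, Finset.sum_mul_sum]
  apply Submodule.sum_mem
  intro k hk
  apply Submodule.sum_mem
  intro k' hk'
  rw [Finset.mem_range] at hk hk'
  have hkα : k ≤ α := by omega
  have hk'β : k' ≤ β := by omega
  have hidx : k + k' < d + 1 := by omega
  have hexp : d - (k + k') = (α - k) + (β - k') := by omega
  have heq : (c₁ • P) ^ k * (c₂ • Q) ^ (α - k) * ↑(α.choose k)
        * ((c₃ • P) ^ k' * (c₄ • Q) ^ (β - k') * ↑(β.choose k'))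
      = (c₁^k * c₂^(α-k) * c₃^k' * c₄^(β-k') * (α.choose k : ℝ) * (β.choose k'))
          • (P ^ (k + k') * Q ^ ((α - k) + (β - k'))) := by
    simp only [smul_eq_C_mul, mul_pow, C_mul, C_pow, map_natCast]
    ring
  rw [heq]
  apply Submodule.smul_mem
  rw [← hexp]
  exact Submodule.subset_span ⟨⟨k + k', hidx⟩, rfl⟩

lemma L_smul (a b : ℝ) : L a b = a • (X 0 : Pol) + b • X 1 := by
  rw [L, smul_eq_C_mul, smul_eq_C_mul]

lemma Lt_smul (a b : ℝ) : Lt a b = b • (X 0 : Pol) + (-a) • X 1 := by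
  rw [Lt, smul_eq_C_mul, neg_smul, smul_eq_C_mul, ← sub_eq_add_neg]

lemma smul_mul_smul' {x y : ℝ} {u v : Pol} : (x • u) * (y • v) = (x*y) • (u*v) := by
  rw [smul_mul_assoc, mul_smul_comm, smul_smul]

/-- spanning: homogeneous degree-d polynomials are spanned by `L^j Lt^(d-j)` -/
lemma Rd_le_span_L_Lt (a b : ℝ) (hs : a^2 + b^2 ≠ 0) (d : ℕ) :
    Rd d ≤ Submodule.span ℝ
      (Set.range fun j : Fin (d+1) => L a b ^ (j : ℕ) * Lt a b ^ (d - (j : ℕ))) := by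
  refine le_trans (Rd_le_span_monomials d) (Submodule.span_le.mpr ?_)
  rintro _ ⟨j, rfl⟩
  simp only [SetLike.mem_coe]
  have key0 : (a^2+b^2) • (X 0 : Pol) = a • L a b + b • Lt a b := by
    rw [L_smul, Lt_smul]; module
  have key1 : (a^2+b^2) • (X 1 : Pol) = b • L a b + (-a) • Lt a b := by
    rw [L_smul, Lt_smul]; module
  have hX0 : (X 0 : Pol) = (a^2+b^2)⁻¹ • (a • L a b + b • Lt a b) := by
    rw [← key0, smul_smul, inv_mul_cancel₀ hs, one_smul]
  have hX1 : (X 1 : Pol) = (a^2+b^2)⁻¹ • (b • L a b + (-a) • Lt a b) := by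
    rw [← key1, smul_smul, inv_mul_cancel₀ hs, one_smul]
  rw [hX0, hX1, smul_pow, smul_pow, smul_mul_smul']
  apply Submodule.smul_mem
  exact combo_pow_mem_span (L a b) (Lt a b) d a b b (-a) (j : ℕ) (d - (j : ℕ))
    (by omega)

lemma L_pow_Lt_pow_mem (a b : ℝ) (j m : ℕ) : L a b ^ j * Lt a b ^ m ∈ Rd (j + m) := by
  rw [mem_Rd]
  have := ((mem_Rd.mp (L_mem a b)).pow j).mul ((mem_Rd.mp (Lt_mem a b)).pow m)
  simpa using this

/-- the substitution sending L to X 0 and Lt to X 1 -/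
def tau (a b : ℝ) : Pol →ₐ[ℝ] Pol :=
  aeval ![(a^2+b^2)⁻¹ • L a b, (a^2+b^2)⁻¹ • Lt a b]

lemma tau_L {a b : ℝ} (hs : a^2+b^2 ≠ 0) : tau a b (L a b) = X 0 := by
  have key0 : (a^2+b^2) • (X 0 : Pol) = a • L a b + b • Lt a b := by
    rw [L_smul, Lt_smul]; module
  have h1 : tau a b (L a b)
      = C a * ((a^2+b^2)⁻¹ • L a b) + C b * ((a^2+b^2)⁻¹ • Lt a b) := by
    rw [tau, L]
    simp [Matrix.cons_val_zero, Matrix.cons_val_one]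
  rw [h1]
  have h2 : C a * ((a^2+b^2)⁻¹ • L a b) + C b * ((a^2+b^2)⁻¹ • Lt a b)
      = (a^2+b^2)⁻¹ • (a • L a b + b • Lt a b) := by
    rw [← smul_eq_C_mul, ← smul_eq_C_mul]
    module
  rw [h2, ← key0, smul_smul, inv_mul_cancel₀ hs, one_smul]

lemma tau_Lt {a b : ℝ} (hs : a^2+b^2 ≠ 0) : tau a b (Lt a b) = X 1 := by
  have key1 : (a^2+b^2) • (X 1 : Pol) = b • L a b + (-a) • Lt a b := by
    rw [L_smul, Lt_smul]; module
  have h1 : tau a b (Lt a b)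
      = C b * ((a^2+b^2)⁻¹ • L a b) - C a * ((a^2+b^2)⁻¹ • Lt a b) := by
    rw [tau, Lt]
    simp [Matrix.cons_val_zero, Matrix.cons_val_one]
  rw [h1]
  have h2 : C b * ((a^2+b^2)⁻¹ • L a b) - C a * ((a^2+b^2)⁻¹ • Lt a b)
      = (a^2+b^2)⁻¹ • (b • L a b + (-a) • Lt a b) := by
    rw [← smul_eq_C_mul, ← smul_eq_C_mul]
    module
  rw [h2, ← key1, smul_smul, inv_mul_cancel₀ hs, one_smul]

/-- **Key kernel lemma**: a homogeneous polynomial of degree `d` killed by the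
`(r+1)`-st power of the directional derivative is divisible by `Lt^(d-r)`. -/
lemma LemK {a b : ℝ} (hs : a^2 + b^2 ≠ 0) {d r : ℕ} (hrd : r < d) {F : Pol}
    (hF : F ∈ Rd d) (hker : (Dop a b ^ (r+1)) F = 0) :
    ∃ g ∈ Rd r, F = Lt a b ^ (d - r) * g := by
  obtain ⟨u, hu⟩ := (Submodule.mem_span_range_iff_exists_fun ℝ).mp (Rd_le_span_L_Lt a b hs d hF)
  have hvan : ∀ j : Fin (d+1), r + 1 ≤ (j:ℕ) → u j = 0 := by
    intro j0 hj0
    obtain ⟨c0, hc0ne, hc0⟩ := Dop_pow_basis a b (j0:ℕ) (d - (j0:ℕ)) (r+1) hj0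
    set μ0 : Fin 2 →₀ ℕ :=
      Finsupp.single 0 ((j0:ℕ) - (r+1)) + Finsupp.single 1 (d - (j0:ℕ)) with hμ0
    have h0 : (0:Pol) = ∑ j : Fin (d+1),
        u j • (Dop a b ^ (r+1)) (L a b ^ (j:ℕ) * Lt a b ^ (d - (j:ℕ))) := by
      rw [← hker, ← hu, map_sum]
      exact Finset.sum_congr rfl fun j _ => map_smul _ _ _
    have h1 : (0:ℝ) = ∑ j : Fin (d+1),
        u j * coeff μ0 (tau a b ((Dop a b ^ (r+1)) (L a b ^ (j:ℕ) * Lt a b ^ (d - (j:ℕ))))) := by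
      have := congrArg (fun p => coeff μ0 (tau a b p)) h0
      simpa [map_sum, coeff_sum, coeff_smul] using this
    have hterm : ∀ j : Fin (d+1), j ≠ j0 →
        u j * coeff μ0 (tau a b ((Dop a b ^ (r+1)) (L a b ^ (j:ℕ) * Lt a b ^ (d - (j:ℕ))))) = 0 := by
      intro j hj
      by_cases hjr : (j:ℕ) < r + 1
      · rw [Dop_pow_basis_zero a b _ _ _ hjr]
        simp
      · push_neg at hjr
        obtain ⟨c, _, hc⟩ := Dop_pow_basis a b (j:ℕ) (d - (j:ℕ)) (r+1) hjr
        rw [hc, map_smul, map_mul, map_pow, map_pow, tau_L hs, tau_Lt hs, coeff_smul,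
          XaXb_eq_monomial, coeff_monomial]
        rw [if_neg]
        · simp
        · intro hcon
          apply hj
          have h0' := DFunLike.congr_fun hcon (0 : Fin 2)
          have h1' := DFunLike.congr_fun hcon (1 : Fin 2)
          simp only [hμ0, Finsupp.add_apply, Finsupp.single_apply] at h0' h1'
          norm_num at h0' h1'
          have hjd : (j:ℕ) ≤ d := by omega
          have hj0d : (j0:ℕ) ≤ d := by omega
          have : (j:ℕ) = (j0:ℕ) := by omega
          exact Fin.ext this
    have hdiag : u j0 * coeff μ0 (tau a b ((Dop a b ^ (r+1))
        (L a b ^ (j0:ℕ) * Lt a b ^ (d - (j0:ℕ))))) = u j0 * c0 := by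
      rw [hc0, map_smul, map_mul, map_pow, map_pow, tau_L hs, tau_Lt hs, coeff_smul,
        XaXb_eq_monomial, coeff_monomial, if_pos rfl, smul_eq_mul, mul_one]
    have hsum := h1
    rw [Finset.sum_eq_single j0 (fun j _ hj => hterm j hj) (by simp)] at hsum
    rw [hdiag] at hsum
    rcases mul_eq_zero.mp hsum.symm with h | h
    · exact h
    · exact absurd h (hc0ne hs)
  refine ⟨∑ j : Fin (d+1),
    (if (j:ℕ) ≤ r then u j • (L a b ^ (j:ℕ) * Lt a b ^ (r - (j:ℕ))) else 0), ?_, ?_⟩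
  · apply Submodule.sum_mem
    intro j _
    by_cases hj : (j:ℕ) ≤ r
    · rw [if_pos hj]
      exact Submodule.smul_mem _ _ (hom_of_eq (L_pow_Lt_pow_mem a b _ _) (by omega))
    · rw [if_neg hj]
      exact Submodule.zero_mem _
  · rw [Finset.mul_sum, ← hu]
    apply Finset.sum_congr rfl
    intro j _
    by_cases hj : (j:ℕ) ≤ r
    · rw [if_pos hj, mul_smul_comm]
      congr 1
      have e : d - (j:ℕ) = (d - r) + (r - (j:ℕ)) := by omega
      rw [e, pow_add]
      ring
    · rw [if_neg hj, hvan j (by omega), zero_smul, mul_zero]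

lemma prime_X0 : Prime (X 0 : Pol) := by
  rw [← MulEquiv.prime_iff (finSuccEquiv ℝ 1).toRingEquiv.toMulEquiv]
  have : (finSuccEquiv ℝ 1).toRingEquiv.toMulEquiv (X 0 : Pol) = Polynomial.X :=
    finSuccEquiv_X_zero
  rw [this]
  exact Polynomial.prime_X

lemma prime_X1 : Prime (X 1 : Pol) := by
  rw [← MulEquiv.prime_iff (renameEquiv ℝ (Equiv.swap (0:Fin 2) 1)).toRingEquiv.toMulEquiv]
  have : (renameEquiv ℝ (Equiv.swap (0:Fin 2) 1)).toRingEquiv.toMulEquiv (X 1 : Pol)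
      = X 0 := by
    show (rename (Equiv.swap (0:Fin 2) 1)) (X 1 : Pol) = X 0
    rw [rename_X]
    norm_num
  rw [this]
  exact prime_X0

lemma prime_L {a b : ℝ} (hab : ¬(a = 0 ∧ b = 0)) : Prime (L a b) := by
  by_cases hb : b = 0
  · -- L a 0 = C a * X 0, a ≠ 0
    have ha : a ≠ 0 := fun h => hab ⟨h, hb⟩
    have hu : IsUnit (C a : Pol) := (isUnit_iff_ne_zero.mpr ha).map (C : ℝ →+* Pol)
    have hassoc : Associated (X 0 : Pol) (L a b) := by
      refine ⟨hu.unit, ?_⟩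
      rw [IsUnit.unit_spec, L, hb]
      simp [mul_comm]
    exact hassoc.prime_iff.mp prime_X0
  · -- invertible substitution sending L a b to X 1
    let ee : Pol →ₐ[ℝ] Pol := aeval ![X 0, C b⁻¹ * (X 1 - C a * X 0)]
    let ff : Pol →ₐ[ℝ] Pol := aeval ![X 0, C a * X 0 + C b * X 1]
    have hbb : (C b : Pol) * C b⁻¹ = 1 := by rw [← C_mul, mul_inv_cancel₀ hb, C_1]
    have h1 : ee.comp ff = AlgHom.id ℝ Pol := by
      refine MvPolynomial.algHom_ext (Fin.forall_fin_two.mpr ⟨?_, ?_⟩)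
      · simp [ee, ff]
      · simp only [AlgHom.coe_comp, Function.comp_apply, aeval_X, AlgHom.id_apply, ee, ff,
          Matrix.cons_val_one, Matrix.head_cons, map_add, map_mul, aeval_C, algebraMap_eq,
          Matrix.cons_val_zero]
        rw [show (C a : Pol) * X 0 + C b * (C b⁻¹ * (X 1 - C a * X 0))
            = (C b * C b⁻¹) * X 1 + (1 - C b * C b⁻¹) * (C a * X 0) by ring, hbb]
        ring
    have h2 : ff.comp ee = AlgHom.id ℝ Pol := by
      refine MvPolynomial.algHom_ext (Fin.forall_fin_two.mpr ⟨?_, ?_⟩)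
      · simp [ee, ff]
      · simp only [AlgHom.coe_comp, Function.comp_apply, aeval_X, AlgHom.id_apply, ee, ff,
          Matrix.cons_val_one, Matrix.head_cons, map_sub, map_mul, aeval_C, algebraMap_eq,
          Matrix.cons_val_zero]
        rw [show (C b⁻¹ : Pol) * ((C a * X 0 + C b * X 1) - C a * X 0)
            = (C b * C b⁻¹) * X 1 by ring, hbb]
        ring
    let E : Pol ≃ₐ[ℝ] Pol := AlgEquiv.ofAlgHom ee ff h1 h2
    have eL : E (L a b) = X 1 := by
      show ee (L a b) = X 1
      rw [L]
      simp only [map_add, map_mul, aeval_C, algebraMap_eq, aeval_X, ee,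
        Matrix.cons_val_zero, Matrix.cons_val_one, Matrix.head_cons]
      rw [show (C a : Pol) * X 0 + C b * (C b⁻¹ * (X 1 - C a * X 0))
          = (C b * C b⁻¹) * X 1 + (1 - C b * C b⁻¹) * (C a * X 0) by ring, hbb]
      ring
    rw [← MulEquiv.prime_iff E.toRingEquiv.toMulEquiv]
    have : E.toRingEquiv.toMulEquiv (L a b) = X 1 := eL
    rw [this]
    exact prime_X1

lemma prime_Lt {a b : ℝ} (hab : ¬(a = 0 ∧ b = 0)) : Prime (Lt a b) := by
  rw [Lt_eq]
  apply prime_L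
  rintro ⟨h1, h2⟩
  exact hab ⟨by linarith [neg_eq_zero.mp h2], h1⟩

/-- component of a product with a homogeneous polynomial, enough-degree case -/
lemma comp_mul {f g : Pol} {Dg e : ℕ} (hg : g ∈ Rd Dg) (hDe : Dg ≤ e) :
    homogeneousComponent e (f * g) = homogeneousComponent (e - Dg) f * g := by
  conv_lhs => rw [← sum_homogeneousComponent f, Finset.sum_mul, map_sum]
  rw [Finset.sum_eq_single (e - Dg)]
  · rw [homogeneousComponent_of_mem
      (((homogeneousComponent_isHomogeneous (e-Dg) f)).mul (mem_Rd.mp hg)), if_pos (by omega)]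
  · intro i _ hine
    rw [homogeneousComponent_of_mem
      (((homogeneousComponent_isHomogeneous i f)).mul (mem_Rd.mp hg)), if_neg (by omega)]
  · intro hnot
    rw [Finset.mem_range, not_lt] at hnot
    rw [homogeneousComponent_eq_zero (e - Dg) f (by omega), zero_mul, map_zero]

/-- component of a product with a homogeneous polynomial, low-degree case -/
lemma comp_mul_lt {f g : Pol} {Dg e : ℕ} (hg : g ∈ Rd Dg) (hDe : e < Dg) :
    homogeneousComponent e (f * g) = 0 := by
  conv_lhs => rw [← sum_homogeneousComponent f, Finset.sum_mul, map_sum]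
  apply Finset.sum_eq_zero
  intro i _
  rw [homogeneousComponent_of_mem
    (((homogeneousComponent_isHomogeneous i f)).mul (mem_Rd.mp hg)), if_neg (by omega)]

/-- proportionality from divisibility among linear forms -/
lemma Lt_dvd_smul {a b a' b' : ℝ} (h : Lt a b ∣ Lt a' b') :
    ∃ c : ℝ, Lt a' b' = c • Lt a b := by
  obtain ⟨u, hu⟩ := h
  refine ⟨coeff 0 u, ?_⟩
  have h1 : homogeneousComponent 1 (Lt a' b') = Lt a' b' := by
    rw [homogeneousComponent_of_mem (mem_Rd.mp (Lt_mem a' b')), if_pos rfl]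
  have h2 : homogeneousComponent 1 (u * Lt a b) = homogeneousComponent 0 u * Lt a b := by
    rw [comp_mul (Lt_mem a b) le_rfl]
  rw [← h1, hu, mul_comm, h2, homogeneousComponent_zero, smul_eq_C_mul]

lemma coeff10_L (a b : ℝ) : coeff (Finsupp.single 0 1) (L a b) = a := by
  rw [L, coeff_add, coeff_C_mul, coeff_C_mul, coeff_X', coeff_X']
  rw [if_pos rfl, if_neg]
  · ring
  · intro hc
    have := DFunLike.congr_fun hc (0 : Fin 2)
    simp at this

lemma coeff01_L (a b : ℝ) : coeff (Finsupp.single 1 1) (L a b) = b := by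
  rw [L, coeff_add, coeff_C_mul, coeff_C_mul, coeff_X', coeff_X']
  rw [if_neg, if_pos rfl]
  · ring
  · intro hc
    have := DFunLike.congr_fun hc (1 : Fin 2)
    simp at this

/-- a smul relation between rotated forms gives one between the forms -/
lemma L_prop_of_Lt_smul {a b a' b' c : ℝ} (h : Lt a' b' = c • Lt a b) :
    L a' b' = c • L a b := by
  have h0 := congrArg (coeff (Finsupp.single 0 1)) h
  have h1 := congrArg (coeff (Finsupp.single 1 1)) h
  rw [Lt_eq, Lt_eq, coeff_smul, coeff10_L, coeff10_L] at h0
  rw [Lt_eq, Lt_eq, coeff_smul, coeff01_L, coeff01_L] at h1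
  -- h0 : b' = c • b, h1 : -a' = c • -a
  have ha : a' = c * a := by
    simp only [smul_eq_mul] at h1; linarith
  have hb : b' = c * b := by simpa [smul_eq_mul] using h0
  rw [L, L, ha, hb, smul_eq_C_mul]
  rw [C_mul, C_mul]
  ring

/-- a vector paired nontrivially against something orthogonal to a family is not in its span -/
lemma not_mem_span_of_perp {ι : Type} (g : ι → Pol) {F μ : Pol}
    (hperp : ∀ i, B (g i) F = 0) (hμ : B μ F ≠ 0) :
    μ ∉ Submodule.span ℝ (Set.range g) := by
  intro h
  have key : ∀ p ∈ Submodule.span ℝ (Set.range g), B p F = 0 := by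
    intro p hp
    induction hp using Submodule.span_induction with
    | mem x hx => obtain ⟨i, rfl⟩ := hx; exact hperp i
    | zero => exact B_zero_left F
    | add x y _ _ hx hy => rw [B_add_left, hx, hy, add_zero]
    | smul c x _ hx => rw [B_smul_left, hx, mul_zero]
  exact hμ (key μ h)

/-- **Duality**: if the only degree-d form orthogonal to the family is zero, then the span of the
family contains all degree-d forms. -/
lemma dual_span {d : ℕ} {ι : Type} [Fintype ι] (g : ι → Pol) (hg : ∀ i, g i ∈ Rd d)
    (hfull : ∀ F ∈ Rd d, (∀ i, B (g i) F = 0) → F = 0) {μ : Pol} (hμ : μ ∈ Rd d) :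
    μ ∈ Submodule.span ℝ (Set.range g) := by
  by_contra hnot
  set V := Rd d
  set g' : ι → V := fun i => ⟨g i, hg i⟩ with hg'
  set μ' : V := ⟨μ, hμ⟩ with hμ'
  set U : Submodule ℝ V := Submodule.span ℝ (Set.range g') with hU
  have hμ'U : μ' ∉ U := by
    intro hc
    apply hnot
    have hmap := Submodule.mem_map_of_mem (f := V.subtype) hc
    rw [Submodule.map_span] at hmap
    have himg : V.subtype '' (Set.range g') = Set.range g := by
      ext x
      constructor
      · rintro ⟨y, ⟨i, rfl⟩, rfl⟩; exact ⟨i, rfl⟩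
      · rintro ⟨i, rfl⟩; exact ⟨g' i, ⟨i, rfl⟩, rfl⟩
    rw [himg] at hmap
    exact hmap
  have hquot : U.mkQ μ' ≠ 0 := by
    rw [Submodule.mkQ_apply, ne_eq, Submodule.Quotient.mk_eq_zero]
    exact hμ'U
  obtain ⟨φ, hφ⟩ : ∃ φ : Module.Dual ℝ (V ⧸ U), φ (U.mkQ μ') ≠ 0 := by
    by_contra hall
    push_neg at hall
    exact hquot ((Module.forall_dual_apply_eq_zero_iff ℝ _).mp hall)
  set ψ : Module.Dual ℝ V := φ.comp U.mkQ with hψ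
  -- the pairing as a map into the dual
  let Bd : V →ₗ[ℝ] Module.Dual ℝ V :=
    { toFun := fun q =>
        { toFun := fun p => B q.1 p.1
          map_add' := fun p1 p2 => by simp [B_add_right]
          map_smul' := fun c p => by simp [B_smul_right] }
      map_add' := fun q1 q2 => by
        ext p; simp [B_add_left]
      map_smul' := fun c q => by
        ext p; simp [B_smul_left] }
  have hinj : Function.Injective Bd := by
    rw [← LinearMap.ker_eq_bot]
    rw [Submodule.eq_bot_iff]
    intro q hq
    rw [LinearMap.mem_ker] at hq
    have : B q.1 q.1 = 0 := by
      have := congrArg (fun (f : Module.Dual ℝ V) => f q) hq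
      exact this
    exact Subtype.ext (B_eq_zero_self this)
  have hsurj : Function.Surjective Bd :=
    (LinearMap.injective_iff_surjective_of_finrank_eq_finrank
      (Subspace.dual_finrank_eq).symm).mp hinj
  obtain ⟨Fq, hFq⟩ := hsurj ψ
  have hFzero : Fq.1 = 0 := by
    apply hfull Fq.1 Fq.2
    intro i
    have h1 : B Fq.1 (g i) = ψ (g' i) := by
      rw [← hFq]; rfl
    have h2 : ψ (g' i) = 0 := by
      rw [hψ]
      simp only [LinearMap.comp_apply, Submodule.mkQ_apply]
      have : (Submodule.Quotient.mk (g' i) : V ⧸ U) = 0 := by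
        rw [Submodule.Quotient.mk_eq_zero]
        exact Submodule.subset_span ⟨i, rfl⟩
      rw [this, map_zero]
    rw [B_symm, h1, h2]
  apply hφ
  have : ψ μ' = 0 := by
    rw [← hFq]
    show B Fq.1 μ = 0
    rw [hFzero, B_zero_left]
  simpa [hψ] using this

lemma B_zero_right (p : Pol) : B p 0 = 0 := by simp [B]

/-- homogeneous slices of the ideal are spanned by monomial multiples of the generators -/
lemma slice {n r : ℕ} (ℓv : Fin n → Pol) (hl : ∀ k, ℓv k ∈ Rd 1) {p : Pol} {e : ℕ}
    (hp : p ∈ Ideal.span (Set.range fun k => ℓv k ^ (r+1))) (hre : r + 1 ≤ e) :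
    homogeneousComponent e p ∈ Submodule.span ℝ (Set.range fun ka : Fin n × Fin (e - r) =>
      ℓv ka.1 ^ (r+1) * ((X 0:Pol) ^ (ka.2:ℕ) * X 1 ^ (e - r - 1 - (ka.2:ℕ)))) := by
  obtain ⟨c, hc⟩ := (Submodule.mem_span_range_iff_exists_fun Pol).mp hp
  rw [← hc, map_sum]
  apply Submodule.sum_mem
  intro k _
  have hpow : ℓv k ^ (r+1) ∈ Rd (r+1) := by
    rw [mem_Rd]
    simpa using (mem_Rd.mp (hl k)).pow (r+1)
  rw [smul_eq_mul, comp_mul hpow hre]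
  have hh : homogeneousComponent (e - (r+1)) (c k) ∈ Rd (e - (r+1)) :=
    homogeneousComponent_isHomogeneous _ _
  have hsp := Rd_le_span_monomials (e - (r+1)) hh
  have hmap := Submodule.mem_map_of_mem (f := LinearMap.mulRight ℝ (ℓv k ^ (r+1))) hsp
  rw [Submodule.map_span] at hmap
  refine Submodule.span_le.mpr ?_ hmap
  rintro _ ⟨_, ⟨j, rfl⟩, rfl⟩
  simp only [LinearMap.mulRight_apply, SetLike.mem_coe]
  have hj : (j : ℕ) < e - r := by
    have := j.2
    omega
  apply Submodule.subset_span
  refine ⟨(k, ⟨(j : ℕ), hj⟩), ?_⟩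
  show ℓv k ^ (r+1) * ((X 0:Pol) ^ (j:ℕ) * X 1 ^ (e - r - 1 - (j:ℕ)))
      = (X 0:Pol) ^ (j:ℕ) * X 1 ^ (e - (r+1) - (j:ℕ)) * ℓv k ^ (r+1)
  have hexp : e - (r+1) - (j:ℕ) = e - r - 1 - (j:ℕ) := by omega
  rw [hexp]
  ring

end Stmt4Aux

open Stmt4Aux

/-- Let `ℓ₁, …, ℓₙ` (`n ≥ 2`) be pairwise non-proportional
homogeneous linear forms in `ℝ[x,y]`, `I = ⟨ℓ₁^{r+1}, …, ℓₙ^{r+1}⟩`,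
`t = min (r+2) n` and `Ω = r + ⌈(r+1)/(t−1)⌉`. Then `Ω` is the minimal `d` such
that `xⁱ yʲ ∈ I` whenever `i + j ≥ d`. -/
theorem stmt4 (r n : ℕ) (hn : 2 ≤ n) (ℓ : Fin n → Pol)
    (hlin : ∀ i, ∃ a b : ℝ, (a, b) ≠ (0, 0) ∧ ℓ i = C a * X 0 + C b * X 1)
    (hprop : ∀ i j, i ≠ j → ∀ c : ℝ, ℓ i ≠ c • ℓ j)
    (I : Ideal Pol) (hI : I = Ideal.span (Set.range fun i => ℓ i ^ (r + 1)))
    (t : ℕ) (ht : t = min (r + 2) n)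
    (Ω : ℤ) (hΩ : Ω = r + ⌈((r : ℚ) + 1) / ((t : ℚ) - 1)⌉) :
    (∀ i j : ℕ, Ω ≤ (i : ℤ) + (j : ℤ) → (X 0 : Pol) ^ i * X 1 ^ j ∈ I) ∧
    (∃ i j : ℕ, (i : ℤ) + (j : ℤ) = Ω - 1 ∧ (X 0 : Pol) ^ i * X 1 ^ j ∉ I) := by
  classical
  -- coefficients of the linear forms
  choose A Bc hAB hLf using hlin
  have hABne : ∀ i, ¬(A i = 0 ∧ Bc i = 0) := by
    intro i h
    exact hAB i (by rw [h.1, h.2])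
  have hLi : ∀ i, ℓ i = L (A i) (Bc i) := fun i => hLf i
  have hsi : ∀ i, (A i)^2 + (Bc i)^2 ≠ 0 := by
    intro i h
    apply hABne i
    constructor <;> nlinarith [sq_nonneg (A i), sq_nonneg (Bc i)]
  -- the rotated forms
  set lt' : Fin n → Pol := fun i => Lt (A i) (Bc i) with hlt'
  have hlt_prime : ∀ i, Prime (lt' i) := by
    intro i
    exact prime_Lt (hABne i)
  -- basic arithmetic about t and Ω
  have ht2 : 2 ≤ t := by
    rw [ht]; exact le_min (by omega) hn
  have htn : t ≤ n := by rw [ht]; exact min_le_right _ _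
  have htq : (0:ℚ) < (t:ℚ) - 1 := by
    have : (2:ℚ) ≤ (t:ℚ) := by exact_mod_cast ht2
    linarith
  set qZ : ℤ := ⌈((r : ℚ) + 1) / ((t : ℚ) - 1)⌉ with hqZ
  have hq1 : 1 ≤ qZ := by
    have : (0:ℤ) < qZ := Int.lt_ceil.mpr (by positivity)
    omega
  set Q : ℕ := qZ.toNat with hQdef
  have hQZ : (Q : ℤ) = qZ := Int.toNat_of_nonneg (by omega)
  have hQ1 : 1 ≤ Q := by omega
  set d : ℕ := r + Q with hd
  have hΩd : Ω = (d : ℤ) := by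
    rw [hΩ, hd, ← hQZ]
    push_cast
    ring
  -- key inequality (A): t * Q ≥ d + 1
  have key1 : r + 1 ≤ (t - 1) * Q := by
    have h1 : ((r:ℚ)+1) / ((t:ℚ)-1) ≤ (qZ : ℚ) := Int.le_ceil _
    have h2 : ((r:ℚ)+1) ≤ (qZ : ℚ) * ((t:ℚ)-1) := by
      rw [div_le_iff₀ htq] at h1
      linarith
    have h3 : ((r:ℤ)+1) ≤ qZ * ((t:ℤ)-1) := by exact_mod_cast h2
    have h4 : ((r:ℤ)+1) ≤ (Q:ℤ) * ((t:ℤ)-1) := by rw [hQZ]; exact h3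
    have h5 : ((t:ℤ)-1) = ((t-1 : ℕ) : ℤ) := by
      have : 1 ≤ t := by omega
      push_cast [this]
      omega
    rw [h5] at h4
    have h6 : (r+1 : ℕ) ≤ Q * (t-1) := by exact_mod_cast h4
    exact (mul_comm Q (t-1)) ▸ h6
  have key1' : d + 1 ≤ t * Q := by
    have e1 : t * Q = (t-1) * Q + Q := by
      have : t = (t-1) + 1 := by omega
      nth_rewrite 1 [this]
      ring
    omega
  -- key inequality (B): (Q-1) * (t-1) ≤ r
  have key2 : (Q - 1) * (t - 1) ≤ r := by
    have h1 : (qZ : ℚ) < ((r:ℚ)+1) / ((t:ℚ)-1) + 1 := Int.ceil_lt_add_one _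
    have h2 : ((qZ:ℚ) - 1) * ((t:ℚ)-1) < (r:ℚ)+1 := by
      rw [← lt_div_iff₀ htq]
      linarith
    have h3 : ((qZ:ℤ) - 1) * ((t:ℤ)-1) < (r:ℤ)+1 := by exact_mod_cast h2
    have h4 : ((Q:ℤ) - 1) * ((t:ℤ)-1) ≤ (r:ℤ) := by rw [hQZ]; omega
    have h5 : (((Q-1:ℕ)):ℤ) * (((t-1:ℕ)):ℤ) ≤ (r:ℤ) := by
      have e1 : ((Q-1:ℕ):ℤ) = (Q:ℤ) - 1 := by omega
      have e2 : ((t-1:ℕ):ℤ) = (t:ℤ) - 1 := by omega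
      rw [e1, e2]; exact h4
    exact_mod_cast h5
  -- membership of generators in the ideal
  have hgenI : ∀ (k : Fin n) (v : Pol), ℓ k ^ (r+1) * v ∈ I := by
    intro k v
    rw [hI]
    exact Ideal.mul_mem_right v _ (Ideal.subset_span ⟨k, rfl⟩)
  have hspan_le_I : ∀ {S : Set Pol}, (∀ p ∈ S, p ∈ I) →
      ∀ p ∈ Submodule.span ℝ S, p ∈ I := by
    intro S hS p hp
    induction hp using Submodule.span_induction with
    | mem x hx => exact hS x hx
    | zero => exact I.zero_mem
    | add x y _ _ hx hy => exact I.add_mem hx hy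
    | smul c x _ hx => rw [smul_eq_C_mul]; exact I.mul_mem_left _ hx
  -- homogeneity of ℓ's
  have hlhom : ∀ k, ℓ k ∈ Rd 1 := fun k => by rw [hLi k]; exact L_mem _ _
  have hlpow : ∀ k, ℓ k ^ (r+1) ∈ Rd (r+1) := by
    intro k
    rw [mem_Rd]
    simpa using (mem_Rd.mp (hlhom k)).pow (r+1)
  -- ===================== PART (a) =====================
  -- the generating family in degree d
  have hrd : r < d := by omega
  set emb : Fin t → Fin n := fun k => ⟨(k:ℕ), lt_of_lt_of_le k.2 htn⟩ with hemb
  set gens : (Fin t × Fin Q) → Pol := fun ka =>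
    ℓ (emb ka.1) ^ (r+1) * ((X 0:Pol) ^ (ka.2:ℕ) * X 1 ^ (Q - 1 - (ka.2:ℕ))) with hgens
  have hgensd : ∀ ka, gens ka ∈ Rd d := by
    rintro ⟨k, a⟩
    rw [hgens]
    have h1 := (mem_Rd.mp (hlpow (emb k))).mul (mem_Rd.mp (XaXb_mem (a:ℕ) (Q - 1 - (a:ℕ))))
    refine hom_of_eq (mem_Rd.mpr h1) ?_
    have := a.2
    omega
  have hfull : ∀ F ∈ Rd d, (∀ ka, B (gens ka) F = 0) → F = 0 := by
    intro F hF hperp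
    -- each directional derivative power kills F
    have hkerk : ∀ k : Fin t, (Dop (A (emb k)) (Bc (emb k)) ^ (r+1)) F = 0 := by
      intro k
      apply eq_zero_of_orth_monomials (e := d - (r+1))
      · exact hom_of_eq (Dop_pow_mem hF (by omega)) rfl
      · intro α β hab
        have hα : α < Q := by omega
        have := hperp (k, ⟨α, hα⟩)
        rw [hgens] at this
        simp only at this
        rw [hLi (emb k), B_L_pow_mul] at this
        have hβ : Q - 1 - α = β := by omega
        rw [hβ] at this
        exact this
    -- divisibility by all the rotated powers
    have hdvdk : ∀ k : Fin t, lt' (emb k) ^ (d - r) ∣ F := by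
      intro k
      obtain ⟨g, _, hg⟩ := LemK (hsi (emb k)) hrd hF (hkerk k)
      exact ⟨g, hg⟩
    set embN : ℕ → Fin n := fun k => ⟨k % n, Nat.mod_lt _ (by omega)⟩ with hembN
    have hembN_eq : ∀ k, k < n → ((embN k : Fin n) : ℕ) = k := by
      intro k hk
      simp [hembN, Nat.mod_eq_of_lt hk]
    have hdvd : ∀ m : ℕ, m ≤ t →
        (∏ k ∈ Finset.range m, lt' (embN k) ^ (d - r)) ∣ F := by
      intro m
      induction m with
      | zero => intro _; simpa using one_dvd F
      | succ m ih =>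
        intro hm1
        obtain ⟨h, hh⟩ := ih (by omega)
        have hmn : m < n := by omega
        have hdk : lt' (embN m) ^ (d - r) ∣ F := by
          have he : embN m = emb ⟨m, by omega⟩ := Fin.ext (Nat.mod_eq_of_lt hmn)
          rw [he]
          exact hdvdk ⟨m, by omega⟩
        have hnd : ¬ lt' (embN m) ∣ ∏ k ∈ Finset.range m, lt' (embN k) ^ (d - r) := by
          intro hdvd'
          obtain ⟨k, hk, hdvd''⟩ := ((hlt_prime (embN m)).dvd_finset_prod_iff _).mp hdvd'
          have hklt := Finset.mem_range.mp hk
          have h1 := (hlt_prime (embN m)).dvd_of_dvd_pow hdvd''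
          obtain ⟨c, hcc⟩ := Lt_dvd_smul h1
          have h2 := L_prop_of_Lt_smul hcc
          have hne : embN k ≠ embN m := by
            intro hc
            have h3 := congrArg Fin.val hc
            rw [hembN_eq k (by omega), hembN_eq m hmn] at h3
            omega
          exact hprop (embN k) (embN m) hne c (by rw [hLi, hLi]; exact h2)
        have hstep : lt' (embN m) ^ (d - r) ∣ h :=
          (hlt_prime (embN m)).pow_dvd_of_dvd_mul_left _ hnd (hh ▸ hdk)
        obtain ⟨h2, hh2⟩ := hstep
        rw [Finset.prod_range_succ]
        exact ⟨h2, by rw [hh, hh2]; ring⟩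
    obtain ⟨h, hh⟩ := hdvd t le_rfl
    have hProd : (∏ k ∈ Finset.range t, lt' (embN k) ^ (d - r)) ∈ Rd (t * (d - r)) := by
      rw [mem_Rd]
      have := MvPolynomial.IsHomogeneous.prod (Finset.range t)
        (fun k => lt' (embN k) ^ (d - r)) (fun _ => d - r)
        (fun k _ => by simpa using (mem_Rd.mp (Lt_mem (A (embN k)) (Bc (embN k)))).pow (d-r))
      simpa [Finset.sum_const, Finset.card_range, Nat.smul_one_eq_cast] using this
    have hdQ : d - r = Q := by omega
    have hgt : d < t * (d - r) := by rw [hdQ]; omega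
    have hFF : homogeneousComponent d F = F := by
      rw [homogeneousComponent_of_mem (mem_Rd.mp hF), if_pos rfl]
    rw [← hFF, hh, mul_comm, comp_mul_lt hProd hgt]
  -- conclusion of part (a) in degree exactly d
  have hmono : ∀ i j : ℕ, i + j = d → (X 0:Pol)^i * X 1^j ∈ I := by
    intro i j hij
    have hμ : (X 0:Pol)^i * X 1^j ∈ Rd d := hom_of_eq (XaXb_mem i j) hij
    have hsp := dual_span gens hgensd hfull hμ
    refine hspan_le_I ?_ _ hsp
    rintro p ⟨ka, rfl⟩
    rw [hgens]
    exact hgenI _ _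
  constructor
  · -- part (a)
    intro i j hij
    have hd_le : d ≤ i + j := by
      rw [hΩd] at hij
      exact_mod_cast le_trans (le_of_eq rfl) (by exact_mod_cast hij)
    set i' := min i d with hi'
    set j' := d - i' with hj'
    have hij' : i' + j' = d := by omega
    have hii : i' ≤ i := by omega
    have hjj : j' ≤ j := by omega
    have hsplit : (X 0:Pol)^i * X 1^j
        = ((X 0:Pol)^(i-i') * X 1^(j-j')) * ((X 0:Pol)^i' * X 1^j') := by
      rw [show i = (i - i') + i' by omega, show j = (j - j') + j' by omega,
        pow_add, pow_add]
      ring_nf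
      rw [show i - i' + i' - i' = i - i' by omega, show j - j' + j' - j' = j - j' by omega]
      ring
    rw [hsplit]
    exact I.mul_mem_left _ (hmono i' j' hij')
  · -- ===================== PART (b) =====================
    by_cases hQ2 : Q = 1
    · -- the monomial x^r is not in I
      refine ⟨r, 0, ?_, ?_⟩
      · rw [hΩd, hd, hQ2]
        push_cast
        ring
      · intro hmem
        rw [hI] at hmem
        obtain ⟨c, hc⟩ := (Submodule.mem_span_range_iff_exists_fun Pol).mp hmem
        have hzero : homogeneousComponent r ((X 0:Pol)^r * X 1^0) = 0 := by
          rw [← hc, map_sum]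
          apply Finset.sum_eq_zero
          intro k _
          rw [smul_eq_mul, comp_mul_lt (hlpow k) (by omega)]
        rw [homogeneousComponent_of_mem (mem_Rd.mp (hom_of_eq (XaXb_mem r 0) (add_zero r))),
          if_pos rfl] at hzero
        rw [XaXb_eq_monomial] at hzero
        exact one_ne_zero (monomial_eq_zero.mp hzero)
    · -- Q ≥ 2, so t = n
      have hQ2' : 2 ≤ Q := by omega
      have htn' : t = n := by
        by_cases hc : r + 2 ≤ n
        · exfalso
          have ht' : t = r + 2 := by rw [ht]; exact min_eq_left hc
          have : qZ = 1 := by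
            rw [hqZ, ht']
            have e1 : ((r+2 : ℕ):ℚ) - 1 = (r:ℚ) + 1 := by push_cast; ring
            rw [e1, div_self (by positivity), Int.ceil_one]
          omega
        · rw [ht]; exact min_eq_right (by omega)
      set d' : ℕ := d - 1 with hd'
      have hd'r : d' = r + (Q - 1) := by omega
      have hn1 : n * (Q - 1) ≤ d' := by
        have e1 : n * (Q-1) = (Q-1) * (n-1) + (Q-1) := by
          have : n = (n-1) + 1 := by omega
          nth_rewrite 1 [this]
          ring
        rw [htn'] at key2
        omega
      set cx : ℕ := d' - n * (Q - 1) with hcx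
      set F : Pol := (∏ k : Fin n, lt' k ^ (Q - 1)) * X 0 ^ cx with hF
      have hprodhom : (∏ k : Fin n, lt' k ^ (Q - 1)) ∈ Rd (n * (Q - 1)) := by
        rw [mem_Rd]
        have := MvPolynomial.IsHomogeneous.prod Finset.univ
          (fun k => lt' k ^ (Q - 1)) (fun _ => Q - 1)
          (fun k _ => by simpa using (mem_Rd.mp (Lt_mem (A k) (Bc k))).pow (Q-1))
        simpa [Finset.sum_const, Finset.card_univ, Nat.smul_one_eq_cast] using this
      have hFhom : F ∈ Rd d' := by
        rw [hF]
        have hx : (X 0:Pol) ^ cx ∈ Rd cx := by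
          have := XaXb_mem cx 0
          rw [pow_zero, mul_one] at this
          exact hom_of_eq this (by omega)
        have := (mem_Rd.mp hprodhom).mul (mem_Rd.mp hx)
        exact hom_of_eq (mem_Rd.mpr this) (by omega)
      have hFne : F ≠ 0 := by
        rw [hF]
        apply mul_ne_zero
        · rw [Finset.prod_ne_zero_iff]
          intro k _
          exact pow_ne_zero _ (hlt_prime k).ne_zero
        · exact pow_ne_zero _ (MvPolynomial.X_ne_zero 0)
      -- F is killed by each D_k^(r+1)
      have hFker : ∀ k : Fin n, (Dop (A k) (Bc k) ^ (r+1)) F = 0 := by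
        intro k
        have hsplitF : F = lt' k ^ (Q-1) *
            ((∏ j ∈ Finset.univ.erase k, lt' j ^ (Q - 1)) * X 0 ^ cx) := by
          rw [hF, ← Finset.mul_prod_erase Finset.univ _ (Finset.mem_univ k)]
          ring
        rw [hsplitF, Dop_pow_Lt_pow_mul]
        have hresthom : (∏ j ∈ Finset.univ.erase k, lt' j ^ (Q - 1)) * X 0 ^ cx ∈ Rd r := by
          have h1 : (∏ j ∈ Finset.univ.erase k, lt' j ^ (Q - 1)) ∈ Rd ((n-1) * (Q-1)) := by
            rw [mem_Rd]
            have := MvPolynomial.IsHomogeneous.prod (Finset.univ.erase k)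
              (fun j => lt' j ^ (Q - 1)) (fun _ => Q - 1)
              (fun j _ => by simpa using (mem_Rd.mp (Lt_mem (A j) (Bc j))).pow (Q-1))
            have hcard : (Finset.univ.erase k).card = n - 1 := by
              rw [Finset.card_erase_of_mem (Finset.mem_univ k), Finset.card_univ,
                Fintype.card_fin]
            simpa [Finset.sum_const, hcard, Nat.smul_one_eq_cast] using this
          have hx : (X 0:Pol) ^ cx ∈ Rd cx := by
            have := XaXb_mem cx 0
            rw [pow_zero, mul_one] at this
            exact hom_of_eq this (by omega)
          have h2 := (mem_Rd.mp h1).mul (mem_Rd.mp hx)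
          refine hom_of_eq (mem_Rd.mpr h2) ?_
          have e1 : n * (Q-1) = (n-1) * (Q-1) + (Q-1) := by
            have : n = (n-1) + 1 := by omega
            nth_rewrite 1 [this]
            ring
          omega
        rw [show r + 1 = r + 1 from rfl]
        rw [Dop_pow_annihilate hresthom, mul_zero]
      -- pick a monomial in the support of F
      obtain ⟨m, hm⟩ := MvPolynomial.ne_zero_iff.mp hFne
      have hijd : m 0 + m 1 = d' := mem_Rd_iff.mp hFhom m hm
      refine ⟨m 0, m 1, ?_, ?_⟩
      · rw [hΩd]
        have : (1:ℕ) ≤ d := by omega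
        push_cast
        omega
      · intro hmem
        -- slice: the monomial is in the span of degree-d' generator multiples
        have hre : r + 1 ≤ d' := by omega
        have hsl := slice ℓ hlhom (hI ▸ hmem) hre
        rw [homogeneousComponent_of_mem
          (mem_Rd.mp (hom_of_eq (XaXb_mem (m 0) (m 1)) hijd)), if_pos rfl] at hsl
        -- but it pairs nontrivially with F
        have hperp : ∀ ka : Fin n × Fin (d' - r),
            B (ℓ ka.1 ^ (r+1) * ((X 0:Pol) ^ (ka.2:ℕ) * X 1 ^ (d' - r - 1 - (ka.2:ℕ)))) F = 0 := by
          rintro ⟨k, a⟩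
          rw [hLi k, B_L_pow_mul, hFker k, B_zero_right]
        have hBμ : B ((X 0:Pol) ^ (m 0) * X 1 ^ (m 1)) F ≠ 0 := by
          rw [B_XaXb, single2_eq]
          exact mul_ne_zero hm (w_pos m).ne'
        exact not_mem_span_of_perp _ hperp hBμ hsl

end
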